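/- Let a, b, σ, β > 0 with b > aβ. For θ ≤ θ_c let y(θ) denote the smaller solution of -b y + (1/2)σ² y² + β(e^{ay} - 1) + θ = 0. Then y is differentiable on (-∞, θ_c) with y'(θ) = 1/(b - σ² y(θ) - βa e^{a y(θ)}), y'(θ) > 0, and y'(θ) → +∞ as θ ↑ θ_c. -/

import Mathlib

open Real Filter

/-- Differentiability of the smaller branch `y(θ)` of
`-by + σ²y²/2 + β(e^{ay}-1) + θ = 0`, with explicit derivative, positivity of the
derivative, and blow-up of the derivative as `θ ↑ θ_c`. -/
theorem smaller_branch_derivative (a b σ β yc : ℝ)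
    (ha : 0 < a) (hb : 0 < b) (hσ : 0 < σ) (hβ : 0 < β) (hba : a * β < b)
    (hyc : 0 < yc) (hyceq : b = σ ^ 2 * yc + β * a * Real.exp (a * yc))
    (θc : ℝ)
    (hθc : θc = b * yc - (1 / 2) * σ ^ 2 * yc ^ 2 - β * (Real.exp (a * yc) - 1))
    (y : ℝ → ℝ)
    (hroot : ∀ θ, θ ≤ θc →
      -b * y θ + (1 / 2) * σ ^ 2 * (y θ) ^ 2 + β * (Real.exp (a * y θ) - 1) + θ = 0)
    (hsmall : ∀ θ, θ ≤ θc → ∀ z : ℝ,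
      -b * z + (1 / 2) * σ ^ 2 * z ^ 2 + β * (Real.exp (a * z) - 1) + θ = 0 → y θ ≤ z) :
    (∀ θ, θ < θc →
      HasDerivAt y (1 / (b - σ ^ 2 * y θ - β * a * Real.exp (a * y θ))) θ
      ∧ 0 < 1 / (b - σ ^ 2 * y θ - β * a * Real.exp (a * y θ)))
    ∧ Tendsto (fun θ => 1 / (b - σ ^ 2 * y θ - β * a * Real.exp (a * y θ)))
        (nhdsWithin θc (Set.Iio θc)) atTop := by
  -- The inverse function F
  set F : ℝ → ℝ := fun t => b * t - (1 / 2) * σ ^ 2 * t ^ 2 - β * (Real.exp (a * t) - 1)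
    with hF
  have hFderiv : ∀ t : ℝ, HasDerivAt F (b - σ ^ 2 * t - β * a * Real.exp (a * t)) t := by
    intro t
    have h1 : HasDerivAt (fun t : ℝ => Real.exp (a * t)) (Real.exp (a * t) * a) t := by
      simpa [Function.comp_def] using (Real.hasDerivAt_exp (a * t)).comp t
        ((hasDerivAt_id t).const_mul a)
    have h2 : HasDerivAt (fun t : ℝ => b * t - (1 / 2) * σ ^ 2 * t ^ 2
        - β * (Real.exp (a * t) - 1))
        (b * 1 - (1 / 2) * σ ^ 2 * (2 * t) - β * (Real.exp (a * t) * a)) t := by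
      exact (((hasDerivAt_id t).const_mul b).sub
        (((hasDerivAt_pow 2 t).const_mul ((1:ℝ)/2 * σ ^ 2)).congr_deriv (by ring))).sub
        (((h1.sub_const 1).const_mul β))
    convert h2 using 1
    ring
  -- F' positive strictly left of yc
  have hFpos : ∀ t : ℝ, t < yc → 0 < b - σ ^ 2 * t - β * a * Real.exp (a * t) := by
    intro t ht
    have hexp : Real.exp (a * t) < Real.exp (a * yc) :=
      Real.exp_lt_exp.2 (by nlinarith)
    nlinarith [sq_nonneg σ, mul_pos hβ ha, Real.exp_pos (a * t)]
  have hFnonneg : ∀ t : ℝ, t ≤ yc → 0 ≤ b - σ ^ 2 * t - β * a * Real.exp (a * t) := by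
    intro t ht
    rcases eq_or_lt_of_le ht with rfl | h
    · nlinarith
    · exact (hFpos t h).le
  have hFcont : Continuous F := by
    apply Continuous.sub
    · exact (continuous_const.mul continuous_id).sub
        (continuous_const.mul (continuous_pow 2))
    · exact continuous_const.mul ((Real.continuous_exp.comp
        (continuous_const.mul continuous_id)).sub continuous_const)
  -- F strictly monotone on Iic yc
  have hFmono : StrictMonoOn F (Set.Iic yc) := by
    apply strictMonoOn_of_deriv_pos (convex_Iic yc) hFcont.continuousOn
    intro t ht
    rw [interior_Iic] at ht
    rw [(hFderiv t).deriv]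
    exact hFpos t ht
  have hFyc : F yc = θc := by rw [hF, hθc]
  -- F (y θ) = θ
  have hFy : ∀ θ, θ ≤ θc → F (y θ) = θ := by
    intro θ hθ
    have := hroot θ hθ
    simp only [hF]
    linarith
  -- y θ ≤ yc for θ ≤ θc
  have hyle : ∀ θ, θ ≤ θc → y θ ≤ yc := by
    intro θ hθ
    -- find a root ≤ yc by IVT
    obtain ⟨t0, ht0le, ht0le'⟩ : ∃ t0 : ℝ, t0 ≤ 0 ∧ b * t0 ≤ θ - β := by
      refine ⟨min 0 ((θ - β) / b), min_le_left _ _, ?_⟩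
      have h : min 0 ((θ - β) / b) ≤ (θ - β) / b := min_le_right _ _
      calc b * min 0 ((θ - β) / b) ≤ b * ((θ - β) / b) := by nlinarith
        _ = θ - β := by field_simp
    have hFt0 : F t0 ≤ θ := by
      have hexp : 0 < Real.exp (a * t0) := Real.exp_pos _
      have h1 : 0 < β * Real.exp (a * t0) := mul_pos hβ hexp
      have h2 : 0 ≤ (1 / 2) * σ ^ 2 * t0 ^ 2 := by positivity
      have h3 : b * t0 - (1 / 2) * σ ^ 2 * t0 ^ 2 - β * (Real.exp (a * t0) - 1) ≤ θ := by
        linarith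
      exact h3
    have ht0yc : t0 ≤ yc := le_trans ht0le hyc.le
    have : ∃ z ∈ Set.Icc t0 yc, F z = θ := by
      apply intermediate_value_Icc ht0yc hFcont.continuousOn
      exact ⟨hFt0, hFyc ▸ hθ⟩
    obtain ⟨z, hz, hFz⟩ := this
    have hzroot : -b * z + (1 / 2) * σ ^ 2 * z ^ 2 + β * (Real.exp (a * z) - 1) + θ = 0 := by
      simp only [hF] at hFz; linarith
    exact le_trans (hsmall θ hθ z hzroot) hz.2
  -- strict inequality for θ < θc
  have hylt : ∀ θ, θ < θc → y θ < yc := by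
    intro θ hθ
    rcases eq_or_lt_of_le (hyle θ hθ.le) with h | h
    · exfalso
      have := hFy θ hθ.le
      rw [h, hFyc] at this
      linarith
    · exact h
  -- y θc = yc
  have hyθc : y θc = yc := by
    have h1 : F (y θc) = F yc := by rw [hFy θc le_rfl, hFyc]
    exact hFmono.injOn (hyle θc le_rfl) (le_refl yc : yc ∈ Set.Iic yc) h1
  -- surjectivity: every t ≤ yc is y (F t)
  have hsurj : ∀ t, t ≤ yc → y (F t) = t ∧ F t ≤ θc := by
    intro t ht
    have hFt : F t ≤ θc := by
      rcases eq_or_lt_of_le ht with rfl | h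
      · exact hFyc.le
      · rw [← hFyc]; exact (hFmono h.le (le_refl yc) h).le
    have hroot' : -b * t + (1 / 2) * σ ^ 2 * t ^ 2 + β * (Real.exp (a * t) - 1) + F t = 0 := by
      simp only [hF]; ring
    have h1 : y (F t) ≤ t := hsmall (F t) hFt t hroot'
    have h2 : F (y (F t)) = F t := hFy (F t) hFt
    exact ⟨hFmono.injOn (le_trans h1 ht) ht h2, hFt⟩
  -- y strictly monotone on Iic θc
  have hymono : StrictMonoOn y (Set.Iic θc) := by
    intro θ₁ h₁ θ₂ h₂ h12
    by_contra h
    push_neg at h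
    have := hFmono.monotoneOn (hyle θ₂ h₂) (hyle θ₁ h₁) h
    rw [hFy θ₁ h₁, hFy θ₂ h₂] at this
    linarith
  -- image of y contains Iic yc
  have himg : Set.Iic yc ⊆ y '' Set.Iic θc := by
    intro t ht
    obtain ⟨h1, h2⟩ := hsurj t ht
    exact ⟨F t, h2, h1⟩
  -- continuity of y at θ < θc
  have hycont : ∀ θ, θ < θc → ContinuousAt y θ := by
    intro θ hθ
    apply hymono.continuousAt_of_image_mem_nhds (Iic_mem_nhds hθ)
    exact Filter.mem_of_superset (Iic_mem_nhds (hylt θ hθ)) himg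
  -- the derivative statement
  have hmain : ∀ θ, θ < θc →
      HasDerivAt y (1 / (b - σ ^ 2 * y θ - β * a * Real.exp (a * y θ))) θ := by
    intro θ hθ
    have hne : b - σ ^ 2 * y θ - β * a * Real.exp (a * y θ) ≠ 0 :=
      (hFpos _ (hylt θ hθ)).ne'
    have hinv : HasDerivAt y (b - σ ^ 2 * y θ - β * a * Real.exp (a * y θ))⁻¹ θ := by
      apply HasDerivAt.of_local_left_inverse (hycont θ hθ) (hFderiv (y θ)) hne
      filter_upwards [Iio_mem_nhds hθ] with x hx
      exact hFy x (le_of_lt hx)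
    simpa [one_div] using hinv
  refine ⟨fun θ hθ => ⟨hmain θ hθ, one_div_pos.2 (hFpos _ (hylt θ hθ))⟩, ?_⟩
  -- blow-up part
  have hcontc : ContinuousWithinAt y (Set.Iic θc) θc := by
    apply hymono.continuousWithinAt_left_of_surjOn self_mem_nhdsWithin
    intro t ht
    rw [hyθc] at ht
    obtain ⟨h1, h2⟩ := hsurj t (le_of_lt ht)
    exact ⟨F t, h2, h1⟩
  have hytend : Tendsto y (nhdsWithin θc (Set.Iio θc)) (nhds yc) := by
    have := hcontc.tendsto
    rw [hyθc] at this
    exact this.mono_left (nhdsWithin_mono _ Set.Iio_subset_Iic_self)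
  have hgtend : Tendsto (fun θ => b - σ ^ 2 * y θ - β * a * Real.exp (a * y θ))
      (nhdsWithin θc (Set.Iio θc)) (nhds 0) := by
    have hcont : Continuous (fun t : ℝ => b - σ ^ 2 * t - β * a * Real.exp (a * t)) := by
      apply Continuous.sub
      · exact continuous_const.sub (continuous_const.mul continuous_id)
      · exact continuous_const.mul (Real.continuous_exp.comp (continuous_const.mul continuous_id))
    have h2 := (hcont.continuousAt (x := yc)).tendsto.comp hytend
    have h0 : b - σ ^ 2 * yc - β * a * Real.exp (a * yc) = 0 := by rw [hyceq]; ring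
    rw [h0] at h2
    exact h2
  have hgpos : ∀ᶠ θ in nhdsWithin θc (Set.Iio θc),
      0 < b - σ ^ 2 * y θ - β * a * Real.exp (a * y θ) := by
    filter_upwards [self_mem_nhdsWithin] with x hx
    exact hFpos _ (hylt x hx)
  have hgt : Tendsto (fun θ => b - σ ^ 2 * y θ - β * a * Real.exp (a * y θ))
      (nhdsWithin θc (Set.Iio θc)) (nhdsWithin 0 (Set.Ioi 0)) :=
    tendsto_nhdsWithin_iff.2 ⟨hgtend, hgpos⟩
  have := tendsto_inv_nhdsGT_zero.comp hgt
  simpa [one_div, Function.comp_def] using this
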